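/- Let ||·||_A be a norm on R^p with unit ball conv(A), let Φ : R^p → R^n be a linear map, and let x* ∈ R^p with y = Φx*. Define the tangent cone T_A(x*) = cone{z - x* : ||z||_A ≤ ||x*||_A}. Then x* is the unique minimizer of ||x||_A subject to Φx = y if and only if null(Φ) ∩ T_A(x*) = {0}. -/
import Mathlib


/-- Let `‖·‖_A = f` be a norm on `ℝ^p` whose unit ball is `conv(A)`,
`Φ : ℝ^p → ℝ^n` linear, `y = Φ x*`, and let
`T_A(x*) = cone{z - x* : f z ≤ f x*}` be the tangent cone.  Then `x*` is the unique
minimizer of `f` subject to `Φ x = y` iff `null(Φ) ∩ T_A(x*) = {0}`. -/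
theorem exact_recovery_iff_nullspace_misses_tangent_cone {p n : ℕ}
    (A : Set (EuclideanSpace ℝ (Fin p))) (f : EuclideanSpace ℝ (Fin p) → ℝ)
    (hball : {x | f x ≤ 1} = convexHull ℝ A)
    (htri : ∀ x y, f (x + y) ≤ f x + f y)
    (hhom : ∀ (c : ℝ) (x : EuclideanSpace ℝ (Fin p)), f (c • x) = |c| * f x)
    (hdef : ∀ x, f x = 0 → x = 0)
    (Φ : EuclideanSpace ℝ (Fin p) →ₗ[ℝ] EuclideanSpace ℝ (Fin n))
    (xstar : EuclideanSpace ℝ (Fin p))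
    (T : Set (EuclideanSpace ℝ (Fin p)))
    (hT : T = {d | ∃ t : ℝ, 0 ≤ t ∧ ∃ z, f z ≤ f xstar ∧ d = t • (z - xstar)}) :
    (∀ x, Φ x = Φ xstar → x ≠ xstar → f xstar < f x) ↔
      (LinearMap.ker Φ : Set (EuclideanSpace ℝ (Fin p))) ∩ T = {0} := by
  subst hT
  constructor
  · intro hmin
    ext d
    constructor
    · rintro ⟨hker, t, ht, z, hz, rfl⟩
      simp only [Set.mem_singleton_iff]
      by_contra hne
      have ht0 : t ≠ 0 := by rintro rfl; simp at hne
      have hzx : z - xstar ≠ 0 := by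
        intro h; apply hne; rw [h, smul_zero]
      have hΦ : Φ (z - xstar) = 0 := by
        have : t • Φ (z - xstar) = 0 := by
          rw [← map_smul]; exact hker
        exact (smul_eq_zero.mp this).resolve_left ht0
      have hΦz : Φ z = Φ xstar := by
        rw [map_sub, sub_eq_zero] at hΦ; exact hΦ
      have hzne : z ≠ xstar := fun h => hzx (by rw [h, sub_self])
      exact absurd hz (not_le.mpr (hmin z hΦz hzne))
    · rintro rfl
      refine ⟨LinearMap.map_zero Φ, 0, le_refl 0, xstar, le_refl _, by simp⟩
  · intro hcap x hΦx hne
    by_contra hlt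
    push_neg at hlt
    have : x - xstar ∈ (LinearMap.ker Φ : Set (EuclideanSpace ℝ (Fin p))) ∩
        {d | ∃ t : ℝ, 0 ≤ t ∧ ∃ z, f z ≤ f xstar ∧ d = t • (z - xstar)} := by
      refine ⟨?_, 1, zero_le_one, x, hlt, by simp⟩
      show Φ (x - xstar) = 0
      rw [map_sub, hΦx, sub_self]
    rw [hcap] at this
    exact hne (by rwa [Set.mem_singleton_iff, sub_eq_zero] at this)
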